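/- Let X be a real-valued random variable with E[X] ≤ 0 and E[e^{|X|}] ≤ K. Then for all t ∈ [0,1], E[e^{tX}] ≤ 1 + K t². -/

import Mathlib

open MeasureTheory Real
open Finset Nat in
lemma exp_hasSum (x : ℝ) : HasSum (fun n : ℕ => x ^ n / n !) (Real.exp x) := by
  have h := (Real.summable_pow_div_factorial x).hasSum
  rwa [show ∑' n : ℕ, x ^ n / n ! = Real.exp x by
    rw [Real.exp_eq_exp_ℝ, NormedSpace.exp_eq_tsum_div]] at h

open Finset Nat in
lemma key (t u : ℝ) (ht0 : 0 ≤ t) (ht1 : t ≤ 1) :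
    Real.exp (t * u) ≤ 1 + t * u + t ^ 2 * Real.exp |u| := by
  have hts := (exp_hasSum (t * u)).tendsto_sum_nat
  refine le_of_tendsto hts ?_
  filter_upwards [Filter.eventually_ge_atTop 2] with N hN
  have hsplit : ∑ n ∈ range N, (t * u) ^ n / n !
      = (1 + t * u) + ∑ n ∈ Ico 2 N, (t * u) ^ n / n ! := by
    rw [range_eq_Ico, ← Finset.sum_Ico_consecutive _ (Nat.zero_le 2) hN, ← range_eq_Ico]
    congr 1
    simp [Finset.sum_range_succ]
  rw [hsplit]
  have h1 : ∑ n ∈ Ico 2 N, (t * u) ^ n / n ! ≤ ∑ n ∈ Ico 2 N, t ^ 2 * (|u| ^ n / n !) := by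
    refine Finset.sum_le_sum fun n hn => ?_
    have hn2 : 2 ≤ n := (Finset.mem_Ico.1 hn).1
    have hnum : (t * u) ^ n ≤ t ^ 2 * |u| ^ n := by
      calc (t * u) ^ n ≤ |(t * u) ^ n| := le_abs_self _
        _ = t ^ n * |u| ^ n := by rw [abs_pow, abs_mul, abs_of_nonneg ht0, mul_pow]
        _ ≤ t ^ 2 * |u| ^ n := by
            gcongr ?_ * _
            exact pow_le_pow_of_le_one ht0 ht1 hn2
    calc (t * u) ^ n / n ! ≤ (t ^ 2 * |u| ^ n) / n ! := by gcongr
      _ = t ^ 2 * (|u| ^ n / n !) := by ring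
  have h2 : ∑ n ∈ Ico 2 N, t ^ 2 * (|u| ^ n / n !) ≤ t ^ 2 * Real.exp |u| := by
    rw [← Finset.mul_sum]
    gcongr
    calc ∑ n ∈ Ico 2 N, |u| ^ n / n ! ≤ ∑ n ∈ range N, |u| ^ n / n ! := by
          refine Finset.sum_le_sum_of_subset_of_nonneg ?_ fun i _ _ => by positivity
          rw [range_eq_Ico]; exact Finset.Ico_subset_Ico (Nat.zero_le 2) le_rfl
      _ ≤ Real.exp |u| := Real.sum_le_exp_of_nonneg (abs_nonneg u) N
  linarith

theorem stmt_1 {Ω : Type*} [MeasurableSpace Ω] (μ : Measure Ω) [IsProbabilityMeasure μ]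
    (X : Ω → ℝ) (K : ℝ) (hK : 0 < K)
    (hXint : Integrable X μ)
    (hexpint : Integrable (fun ω => Real.exp |X ω|) μ)
    (hmean : ∫ ω, X ω ∂μ ≤ 0)
    (hexp : ∫ ω, Real.exp |X ω| ∂μ ≤ K) :
    ∀ t ∈ Set.Icc (0 : ℝ) 1, ∫ ω, Real.exp (t * X ω) ∂μ ≤ 1 + K * t ^ 2 := by
  rintro t ⟨ht0, ht1⟩
  have hpt : ∀ ω, Real.exp (t * X ω) ≤ 1 + t * X ω + t ^ 2 * Real.exp |X ω| :=
    fun ω => key t (X ω) ht0 ht1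
  have hg1 : Integrable (fun ω => 1 + t * X ω) μ := (integrable_const 1).add (hXint.const_mul t)
  have hg : Integrable (fun ω => 1 + t * X ω + t ^ 2 * Real.exp |X ω|) μ :=
    hg1.add (hexpint.const_mul (t ^ 2))
  have hf : Integrable (fun ω => Real.exp (t * X ω)) μ := by
    refine hg.mono ?_ ?_
    · exact Real.continuous_exp.comp_aestronglyMeasurable
        (hXint.aestronglyMeasurable.const_mul t)
    · filter_upwards with ω
      rw [Real.norm_eq_abs, abs_of_pos (Real.exp_pos _), Real.norm_eq_abs]
      exact (hpt ω).trans (le_abs_self _)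
  have hmono : ∫ ω, Real.exp (t * X ω) ∂μ
      ≤ ∫ ω, (1 + t * X ω + t ^ 2 * Real.exp |X ω|) ∂μ := integral_mono hf hg hpt
  have heq : ∫ ω, (1 + t * X ω + t ^ 2 * Real.exp |X ω|) ∂μ
      = 1 + t * ∫ ω, X ω ∂μ + t ^ 2 * ∫ ω, Real.exp |X ω| ∂μ := by
    rw [integral_add hg1 (hexpint.const_mul (t ^ 2)),
      integral_add (integrable_const 1) (hXint.const_mul t),
      integral_const, integral_const_mul, integral_const_mul, probReal_univ]
    simp
  have h3 : t * ∫ ω, X ω ∂μ ≤ 0 := mul_nonpos_of_nonneg_of_nonpos ht0 hmean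
  have h4 : t ^ 2 * ∫ ω, Real.exp |X ω| ∂μ ≤ t ^ 2 * K :=
    mul_le_mul_of_nonneg_left hexp (sq_nonneg t)
  rw [heq] at hmono
  nlinarith
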